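/- Suppose that assumptions (A1) and (A2) hold. Then Σ_{k=m(h)+1}^∞ |a_k|/r^{k−1} = O(h · A_{m(h)}^{1/2−δ/2}) as h ↓ 0. -/

import Mathlib

open MeasureTheory Filter Real Set Topology Asymptotics

noncomputable section

/-- distance from `x` to its nearest integer -/
def distInt (x : ℝ) : ℝ := |x - round x|

/-- the Takagi--van der Waerden class function `f_{r,a}` -/
def tvdW (r : ℕ) (a : ℕ → ℝ) (x : ℝ) : ℝ :=
  ∑' k : ℕ, a (k + 1) / (r : ℝ) ^ k * distInt ((r : ℝ) ^ k * x)

/-- `ψ_k(x) = r^{-(k-1)} d(r^{k-1} x)` -/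
def psi (r k : ℕ) (x : ℝ) : ℝ := distInt ((r : ℝ) ^ (k - 1) * x) / (r : ℝ) ^ (k - 1)

/-- right-hand derivative of `ψ_k` -/
def psiPlus (r k : ℕ) (x : ℝ) : ℝ := derivWithin (psi r k) (Set.Ici x) x

/-- `w_n(x) = Σ_{k=1}^n a_k ψ_k⁺(x)` -/
def wSum (r : ℕ) (a : ℕ → ℝ) (n : ℕ) (x : ℝ) : ℝ :=
  ∑ k ∈ Finset.Icc 1 n, a k * psiPlus r k x

/-- `V_n = ∫_0^1 w_n(x)² dx` -/
def Vvar (r : ℕ) (a : ℕ → ℝ) (n : ℕ) : ℝ := ∫ x in (0:ℝ)..1, (wSum r a n x) ^ 2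

/-- `A_n = Σ_{k=1}^n a_k²` -/
def Asum (a : ℕ → ℝ) (n : ℕ) : ℝ := ∑ k ∈ Finset.Icc 1 n, (a k) ^ 2

/-- `m(h) = ⌊log_r (1/|h|)⌋` -/
def mIdx (r : ℕ) (h : ℝ) : ℕ := (⌊Real.logb r (1 / |h|)⌋).toNat

/-- a standard Brownian motion on a probability space -/
structure IsStdBM {Ω : Type*} [MeasurableSpace Ω] (P : Measure Ω) (B : ℝ → Ω → ℝ) : Prop where
  meas : ∀ t, Measurable (B t)
  zero : ∀ᵐ ω ∂P, B 0 ω = 0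
  cont : ∀ᵐ ω ∂P, Continuous fun t => B t ω
  gauss : ∀ s t : ℝ, 0 ≤ s → s ≤ t →
    P.map (fun ω => B t ω - B s ω) = ProbabilityTheory.gaussianReal 0 ((t - s).toNNReal)
  indep : ∀ (n : ℕ) (ts : Fin (n + 1) → ℝ), Monotone ts → (∀ i, 0 ≤ ts i) →
    ProbabilityTheory.iIndepFun
      (fun i : Fin n => fun ω => B (ts i.succ) ω - B (ts i.castSucc) ω) P

end


lemma asum_nonneg (a : ℕ → ℝ) (n : ℕ) : 0 ≤ Asum a n :=
  Finset.sum_nonneg fun _ _ => sq_nonneg _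

lemma asum_succ (a : ℕ → ℝ) (n : ℕ) : Asum a (n+1) = Asum a n + a (n+1) ^ 2 := by
  unfold Asum
  rw [Finset.sum_Icc_succ_top (by omega : 1 ≤ n+1)]

lemma sqrt_two_pow (k : ℕ) : Real.sqrt ((2:ℝ)^k) = (Real.sqrt 2)^k := by
  induction k with
  | zero => simp
  | succ k ih => rw [pow_succ, pow_succ, Real.sqrt_mul (by positivity), ih]

/-- **Lemma 4.2.** Under (A1) and (A2),
`Σ_{k=m(h)+1}^∞ |a_k|/r^{k−1} = O(h · A_{m(h)}^{1/2−δ/2})` as `h ↓ 0`. -/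
theorem stmt14 (r : ℕ) (hr : 2 ≤ r) (a : ℕ → ℝ) (δ : ℝ) (hδ : δ ∈ Set.Ioc (0:ℝ) 1)
    (hA1 : Tendsto (Asum a) atTop atTop)
    (hA2 : (fun n => (a n) ^ 2) =O[atTop] fun n => Asum a n ^ (1 - δ)) :
    (fun h : ℝ => ∑' k : ℕ, |a (mIdx r h + 1 + k)| / (r : ℝ) ^ (mIdx r h + k))
      =O[𝓝[>] (0:ℝ)] fun h : ℝ => h * Asum a (mIdx r h) ^ ((1:ℝ)/2 - δ/2) := by
  obtain ⟨hδ0, hδ1⟩ := hδ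
  have hr2 : (2:ℝ) ≤ (r:ℝ) := by exact_mod_cast hr
  have hr1 : (1:ℝ) < (r:ℝ) := by linarith
  have hr0 : (0:ℝ) < (r:ℝ) := by linarith
  obtain ⟨C0, hC0, hbig⟩ := hA2.exists_pos
  obtain ⟨N0, hN0⟩ := Filter.eventually_atTop.mp hbig.bound
  have hN0' : ∀ n, N0 ≤ n → a n ^ 2 ≤ C0 * Asum a n ^ (1 - δ) := by
    intro n hn
    have := hN0 n hn
    rwa [Real.norm_eq_abs, Real.norm_eq_abs, abs_of_nonneg (sq_nonneg _),
      abs_of_nonneg (Real.rpow_nonneg (asum_nonneg a n) _)] at this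
  set T : ℝ := max 1 ((2*C0) ^ (1/δ : ℝ)) with hT
  obtain ⟨N1', hN1'⟩ := Filter.eventually_atTop.mp (hA1.eventually_ge_atTop T)
  set N1 := max N1' N0 with hN1def
  have hthresh : ∀ n, N1 ≤ n → T ≤ Asum a n := fun n hn =>
    hN1' n (le_trans (le_max_left _ _) hn)
  have hhalf : ∀ n, N1 ≤ n → a n ^ 2 ≤ Asum a n / 2 := by
    intro n hn
    have hA := hthresh n hn
    have hApos : (0:ℝ) < Asum a n := lt_of_lt_of_le one_pos (le_trans (le_max_left _ _) hA)
    have h1 : a n ^ 2 ≤ C0 * Asum a n ^ (1-δ) := hN0' n (le_trans (le_max_right _ _) hn)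
    have hAδ : 2 * C0 ≤ Asum a n ^ δ := by
      have h2 : ((2*C0) ^ (1/δ : ℝ)) ^ δ ≤ Asum a n ^ δ :=
        Real.rpow_le_rpow (Real.rpow_nonneg (by positivity) _)
          (le_trans (le_max_right _ _) hA) hδ0.le
      rwa [← Real.rpow_mul (by positivity), one_div, inv_mul_cancel₀ hδ0.ne',
        Real.rpow_one] at h2
    have h4 : Asum a n ^ (1-δ) * (2*C0) ≤ Asum a n ^ (1-δ) * Asum a n ^ δ :=
      mul_le_mul_of_nonneg_left hAδ (Real.rpow_nonneg hApos.le _)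
    rw [← Real.rpow_add hApos] at h4
    have he : (1-δ)+δ = 1 := by ring
    rw [he, Real.rpow_one] at h4
    linarith
  have hdouble : ∀ n, N1 ≤ n → Asum a (n+1) ≤ 2 * Asum a n := by
    intro n hn
    have h1 : a (n+1) ^ 2 ≤ Asum a (n+1) / 2 := hhalf (n+1) (by omega)
    have h2 := asum_succ a n
    linarith
  have hgrow : ∀ m, N1 ≤ m → ∀ k, Asum a (m+k) ≤ 2^k * Asum a m := by
    intro m hm k
    induction k with
    | zero => simp
    | succ k ih =>
      have hd := hdouble (m+k) (by omega)
      have h2k : (0:ℝ) ≤ 2^k := by positivity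
      calc Asum a (m+(k+1)) = Asum a ((m+k)+1) := by rw [Nat.add_assoc]
        _ ≤ 2 * Asum a (m+k) := hd
        _ ≤ 2 * (2^k * Asum a m) := by linarith
        _ = 2^(k+1) * Asum a m := by ring
  have habs : ∀ n, N1 ≤ n → |a n| ≤ Real.sqrt C0 * Asum a n ^ ((1-δ)/2 : ℝ) := by
    intro n hn
    have h1 : a n ^ 2 ≤ C0 * Asum a n ^ (1-δ) := hN0' n (le_trans (le_max_right _ _) hn)
    rw [← Real.sqrt_sq_eq_abs]
    calc Real.sqrt (a n ^ 2) ≤ Real.sqrt (C0 * Asum a n ^ (1-δ)) := Real.sqrt_le_sqrt h1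
      _ = Real.sqrt C0 * Real.sqrt (Asum a n ^ (1-δ)) := Real.sqrt_mul hC0.le _
      _ = Real.sqrt C0 * Asum a n ^ ((1-δ)/2 : ℝ) := by
          congr 1
          rw [Real.sqrt_eq_rpow, ← Real.rpow_mul (asum_nonneg a n)]
          congr 1
          ring
  set s : ℝ := Real.sqrt 2 with hs
  have hs0 : 0 ≤ s := Real.sqrt_nonneg 2
  have hs2 : s < 2 := by
    have h1 : s^2 = 2 := Real.sq_sqrt (by norm_num)
    nlinarith
  set q : ℝ := s / r with hq
  have hq0 : 0 ≤ q := div_nonneg hs0 hr0.le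
  have hq1 : q < 1 := by
    rw [hq, div_lt_one hr0]; linarith
  have h1q : (0:ℝ) < 1 - q := by linarith
  set C : ℝ := Real.sqrt C0 * s * (1-q)⁻¹ * r with hCdef
  rw [Asymptotics.isBigO_iff]
  refine ⟨C, ?_⟩
  have hε : (0:ℝ) < ((r:ℝ)^(N1+1))⁻¹ := by positivity
  filter_upwards [Ioo_mem_nhdsGT_of_mem (by simp [hε] :
      (0:ℝ) ∈ Set.Ico 0 (((r:ℝ)^(N1+1))⁻¹))] with h hh
  obtain ⟨hh0, hhε⟩ := hh
  set m := mIdx r h with hmdef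
  have habsh : |h| = h := abs_of_pos hh0
  have hhinv : (0:ℝ) < 1/|h| := by rw [habsh]; positivity
  -- lower bound on m
  have hpow_lt : (r:ℝ)^(N1+1) < 1/h := by
    rw [lt_div_iff₀ hh0]
    have := (lt_div_iff₀ (by positivity : (0:ℝ) < (r:ℝ)^(N1+1))).mp
      (by rwa [inv_eq_one_div] at hhε)
    linarith [this]
  have hlog_ge : ((N1:ℝ)+1) < Real.logb r (1/|h|) := by
    rw [habsh, Real.lt_logb_iff_rpow_lt hr1 (by positivity)]
    calc (r:ℝ) ^ ((N1:ℝ)+1) = (r:ℝ) ^ ((N1+1 : ℕ):ℝ) := by push_cast; ring_nf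
      _ = (r:ℝ) ^ (N1+1) := Real.rpow_natCast _ _
      _ < 1/h := hpow_lt
  have hfloor_nonneg : (0:ℤ) ≤ ⌊Real.logb r (1/|h|)⌋ := by
    apply Int.le_floor.mpr
    push_cast
    linarith [hlog_ge]
  have hmN1 : N1 + 1 ≤ m := by
    rw [hmdef]
    unfold mIdx
    rw [Int.le_toNat hfloor_nonneg]
    apply Int.le_floor.mpr
    push_cast
    linarith [hlog_ge]
  have hm_cast : (⌊Real.logb r (1/|h|)⌋ : ℝ) = (m:ℝ) := by
    have hz : ⌊Real.logb r (1/|h|)⌋ = (m : ℤ) := by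
      rw [hmdef]; unfold mIdx
      exact (Int.toNat_of_nonneg hfloor_nonneg).symm
    exact_mod_cast hz
  -- upper bound : 1/h < r^(m+1)
  have hup : 1/h < (r:ℝ)^(m+1) := by
    have h1 : Real.logb r (1/|h|) < (m:ℝ) + 1 := by
      rw [← hm_cast]; exact_mod_cast Int.lt_floor_add_one (Real.logb r (1/|h|))
    rw [habsh] at h1
    have h2 := (Real.logb_lt_iff_lt_rpow hr1 (by positivity : (0:ℝ) < 1/h)).mp h1
    calc 1/h < (r:ℝ) ^ ((m:ℝ)+1) := h2
      _ = (r:ℝ) ^ ((m+1 : ℕ):ℝ) := by push_cast; ring_nf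
      _ = (r:ℝ)^(m+1) := Real.rpow_natCast _ _
  have hrm : ((r:ℝ)^m)⁻¹ < r * h := by
    have hpm : (0:ℝ) < (r:ℝ)^m := by positivity
    rw [inv_eq_one_div, div_lt_iff₀ hpm]
    rw [div_lt_iff₀ hh0, pow_succ] at hup
    nlinarith
  -- the main estimate
  set E : ℝ := Asum a m ^ ((1-δ)/2 : ℝ) with hEdef
  have hAm1 : (1:ℝ) ≤ Asum a m := le_trans (le_max_left _ _) (hthresh m (by omega))
  have hE0 : 0 ≤ E := Real.rpow_nonneg (by linarith) _
  have hterm : ∀ k : ℕ, |a (m+1+k)| / (r:ℝ)^(m+k)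
      ≤ (Real.sqrt C0 * s * E / (r:ℝ)^m) * q^k := by
    intro k
    have h1 : |a (m+1+k)| ≤ Real.sqrt C0 * Asum a (m+1+k) ^ ((1-δ)/2:ℝ) :=
      habs _ (by omega)
    have h2 : Asum a (m+1+k) ≤ 2^(1+k) * Asum a m := by
      have := hgrow m (by omega) (1+k)
      rwa [show m+(1+k) = m+1+k by omega] at this
    have h3 : Asum a (m+1+k) ^ ((1-δ)/2:ℝ) ≤ ((2:ℝ)^(1+k) * Asum a m) ^ ((1-δ)/2:ℝ) :=
      Real.rpow_le_rpow (asum_nonneg a _) h2 (by linarith)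
    have h4 : ((2:ℝ)^(1+k) * Asum a m) ^ ((1-δ)/2:ℝ)
        = ((2:ℝ)^(1+k)) ^ ((1-δ)/2:ℝ) * E :=
      Real.mul_rpow (by positivity) (by linarith)
    have h5 : ((2:ℝ)^(1+k)) ^ ((1-δ)/2:ℝ) ≤ s^(1+k) := by
      calc ((2:ℝ)^(1+k)) ^ ((1-δ)/2:ℝ) ≤ ((2:ℝ)^(1+k)) ^ ((1:ℝ)/2) :=
            Real.rpow_le_rpow_of_exponent_le (one_le_pow₀ (by norm_num)) (by linarith)
        _ = Real.sqrt ((2:ℝ)^(1+k)) := (Real.sqrt_eq_rpow _).symm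
        _ = s^(1+k) := sqrt_two_pow _
    have h6 : |a (m+1+k)| ≤ Real.sqrt C0 * (s^(1+k) * E) := by
      calc |a (m+1+k)| ≤ Real.sqrt C0 * Asum a (m+1+k) ^ ((1-δ)/2:ℝ) := h1
        _ ≤ Real.sqrt C0 * (((2:ℝ)^(1+k)) ^ ((1-δ)/2:ℝ) * E) := by
            rw [← h4]
            exact mul_le_mul_of_nonneg_left h3 (Real.sqrt_nonneg _)
        _ ≤ Real.sqrt C0 * (s^(1+k) * E) := by
            apply mul_le_mul_of_nonneg_left _ (Real.sqrt_nonneg _)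
            exact mul_le_mul_of_nonneg_right h5 hE0
    have hpr : (0:ℝ) < (r:ℝ)^(m+k) := by positivity
    calc |a (m+1+k)| / (r:ℝ)^(m+k) ≤ (Real.sqrt C0 * (s^(1+k) * E)) / (r:ℝ)^(m+k) := by
          gcongr
      _ = (Real.sqrt C0 * s * E / (r:ℝ)^m) * q^k := by
          rw [hq, div_pow, pow_add, pow_add, pow_one]
          field_simp
  have hsum2 : Summable (fun k : ℕ => (Real.sqrt C0 * s * E / (r:ℝ)^m) * q^k) :=
    (summable_geometric_of_lt_one hq0 hq1).mul_left _
  have hsum1 : Summable (fun k : ℕ => |a (m+1+k)| / (r:ℝ)^(m+k)) :=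
    Summable.of_nonneg_of_le (fun k => by positivity) hterm hsum2
  have htsum : (∑' k : ℕ, |a (m+1+k)| / (r:ℝ)^(m+k))
      ≤ (Real.sqrt C0 * s * E / (r:ℝ)^m) * (1-q)⁻¹ := by
    calc (∑' k : ℕ, |a (m+1+k)| / (r:ℝ)^(m+k))
        ≤ ∑' k : ℕ, (Real.sqrt C0 * s * E / (r:ℝ)^m) * q^k :=
          Summable.tsum_le_tsum hterm hsum1 hsum2
      _ = (Real.sqrt C0 * s * E / (r:ℝ)^m) * ∑' k : ℕ, q^k := tsum_mul_left
      _ = (Real.sqrt C0 * s * E / (r:ℝ)^m) * (1-q)⁻¹ := by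
          rw [tsum_geometric_of_lt_one hq0 hq1]
  have hfac : 0 ≤ Real.sqrt C0 * s * (1-q)⁻¹ * E :=
    mul_nonneg (mul_nonneg (mul_nonneg (Real.sqrt_nonneg _) hs0) (by positivity)) hE0
  have hfinal : (Real.sqrt C0 * s * E / (r:ℝ)^m) * (1-q)⁻¹ ≤ C * (h * E) := by
    calc (Real.sqrt C0 * s * E / (r:ℝ)^m) * (1-q)⁻¹
        = (Real.sqrt C0 * s * (1-q)⁻¹ * E) * ((r:ℝ)^m)⁻¹ := by
          rw [div_eq_mul_inv]; ring
      _ ≤ (Real.sqrt C0 * s * (1-q)⁻¹ * E) * (r * h) :=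
          mul_le_mul_of_nonneg_left hrm.le hfac
      _ = C * (h * E) := by rw [hCdef]; ring
  have hEE : Asum a m ^ ((1:ℝ)/2 - δ/2) = E := by
    rw [hEdef]; congr 1; ring
  rw [Real.norm_eq_abs, Real.norm_eq_abs, hEE,
    abs_of_nonneg (tsum_nonneg (fun k : ℕ => by positivity :
      ∀ k : ℕ, (0:ℝ) ≤ |a (m+1+k)| / (r:ℝ)^(m+k))),
    abs_of_nonneg (mul_nonneg hh0.le hE0)]
  linarith
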